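/- Let k be a field and p a monic irreducible polynomial over k of degree 2d with p(0) ≠ 0, and let l be a positive integer. In the ring k[x]/(p(x)^l) the class of x is a unit; set s(x) := x^{-d} p(x). Then the 2dl elements { x^i s(x)^j : 0 ≤ i ≤ 2d−1, 0 ≤ j ≤ l−1 } form a basis of k[x]/(p(x)^l) as a k-vector space. -/

import Mathlib

open Polynomial

private lemma aux_padic {k : Type*} [Field k] {p : k[X]} (hp : Prime p) (hpx : ¬ p ∣ X) :
    ∀ (l : ℕ) (m : ℕ → ℕ) (r : ℕ → k[X]), (∀ j, (r j).degree < p.degree) →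
      (∑ j ∈ Finset.range l, p ^ j * (X ^ (m j) * r j)) = 0 → ∀ j < l, r j = 0 := by
  intro l
  induction l with
  | zero => intro m r _ _ j hj; omega
  | succ n ih =>
    intro m r hdeg hsum j hj
    rw [Finset.sum_range_succ'] at hsum
    have hS : p ∣ ∑ i ∈ Finset.range n, p ^ (i + 1) * (X ^ (m (i + 1)) * r (i + 1)) :=
      Finset.dvd_sum fun i _ => Dvd.dvd.mul_right (dvd_pow_self p (Nat.succ_ne_zero i)) _
    have hdvd0 : p ∣ X ^ (m 0) * r 0 := by
      have : X ^ (m 0) * r 0 =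
          (∑ i ∈ Finset.range n, p ^ (i + 1) * (X ^ (m (i + 1)) * r (i + 1)) +
            p ^ 0 * (X ^ (m 0) * r 0)) -
          ∑ i ∈ Finset.range n, p ^ (i + 1) * (X ^ (m (i + 1)) * r (i + 1)) := by ring
      rw [this, hsum]
      exact dvd_sub (dvd_zero p) hS
    have hr0 : r 0 = 0 := by
      have hpr : p ∣ r 0 := by
        rcases hp.2.2 _ _ hdvd0 with h | h
        · exact absurd (hp.dvd_of_dvd_pow h) hpx
        · exact h
      exact eq_zero_of_dvd_of_degree_lt hpr (hdeg 0)
    rcases Nat.eq_zero_or_pos j with rfl | hjpos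
    · exact hr0
    · obtain ⟨j', rfl⟩ : ∃ j', j = j' + 1 := ⟨j - 1, by omega⟩
      have hsum' : p * ∑ i ∈ Finset.range n, p ^ i * (X ^ (m (i + 1)) * r (i + 1)) = 0 := by
        rw [Finset.mul_sum]
        rw [hr0] at hsum
        simpa [mul_comm, mul_assoc, pow_succ, mul_left_comm] using hsum
      have hsum'' : ∑ i ∈ Finset.range n, p ^ i * (X ^ (m (i + 1)) * r (i + 1)) = 0 := by
        rcases mul_eq_zero.mp hsum' with h | h
        · exact absurd h hp.ne_zero
        · exact h
      exact ih (fun i => m (i + 1)) (fun i => r (i + 1)) (fun i => hdeg (i + 1)) hsum'' j' (by omega)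

/-- Let `p` be a monic irreducible polynomial of degree `2d` over a field `k`
with `p(0) ≠ 0`, and `l ≥ 1`. In `k[x]/(p^l)` the class of `x` is a unit, and setting
`s = x^{-d} p(x)`, the `2dl` elements `x^i s^j` (`0 ≤ i ≤ 2d-1`, `0 ≤ j ≤ l-1`) form a
`k`-basis of `k[x]/(p^l)`. -/
theorem stmt_8 {k : Type*} [Field k] (p : k[X]) (d l : ℕ)
    (hmonic : p.Monic) (hirr : Irreducible p) (hdeg : p.natDegree = 2 * d)
    (hp0 : p.eval 0 ≠ 0) (hl : 1 ≤ l) :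
    IsUnit (AdjoinRoot.root (p ^ l)) ∧
    LinearIndependent k (fun ij : Fin (2 * d) × Fin l =>
        AdjoinRoot.root (p ^ l) ^ (ij.1 : ℕ) *
          (Ring.inverse (AdjoinRoot.root (p ^ l)) ^ d * AdjoinRoot.mk (p ^ l) p) ^ (ij.2 : ℕ)) ∧
    Submodule.span k (Set.range fun ij : Fin (2 * d) × Fin l =>
        AdjoinRoot.root (p ^ l) ^ (ij.1 : ℕ) *
          (Ring.inverse (AdjoinRoot.root (p ^ l)) ^ d * AdjoinRoot.mk (p ^ l) p) ^ (ij.2 : ℕ)) = ⊤ := by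
  classical
  have hpne : p ≠ 0 := hmonic.ne_zero
  have hplne : p ^ l ≠ 0 := pow_ne_zero _ hpne
  have hXp : ¬ (X : k[X]) ∣ p := by
    rw [X_dvd_iff, coeff_zero_eq_eval_zero]; exact hp0
  have hd : 0 < d := by
    rcases Nat.eq_zero_or_pos d with h | h
    · exfalso
      have hp1 : p = 1 := hmonic.natDegree_eq_zero.mp (by omega)
      rw [hp1] at hirr
      exact not_irreducible_one hirr
    · exact h
  have hpX : ¬ p ∣ (X : k[X]) := by
    intro h
    have h2 := degree_le_of_dvd h X_ne_zero
    rw [degree_X, degree_eq_natDegree hpne, hdeg] at h2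
    have : (2 * d : ℕ) ≤ 1 := by exact_mod_cast h2
    omega
  have hcop : IsCoprime (X : k[X]) (p ^ l) :=
    (irreducible_X.coprime_iff_not_dvd.mpr hXp).pow_right
  set u := AdjoinRoot.root (p ^ l) with hu_def
  have hu : IsUnit u := by
    obtain ⟨a, b, hab⟩ := hcop
    refine IsUnit.of_mul_eq_one (AdjoinRoot.mk (p ^ l) a) ?_
    have h2 := congrArg (AdjoinRoot.mk (p ^ l)) hab
    simp only [map_add, map_mul, map_one, AdjoinRoot.mk_self, AdjoinRoot.mk_X, mul_zero,
      add_zero] at h2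
    rw [mul_comm]; exact h2
  set v := Ring.inverse u with hv_def
  have huv : u * v = 1 := Ring.mul_inverse_cancel _ hu
  -- key computation
  have key : ∀ (i : Fin (2 * d)) (j : Fin l),
      u ^ (d * (l - 1)) * (u ^ (i : ℕ) * (v ^ d * AdjoinRoot.mk (p ^ l) p) ^ (j : ℕ)) =
      AdjoinRoot.mk (p ^ l) (X ^ ((i : ℕ) + d * (l - 1 - (j : ℕ))) * p ^ (j : ℕ)) := by
    intro i j
    have h1 : u ^ (d * (j : ℕ)) * v ^ (d * (j : ℕ)) = 1 := by rw [← mul_pow, huv, one_pow]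
    have harith : d * (l - 1) + (i : ℕ) = ((i : ℕ) + d * (l - 1 - (j : ℕ))) + d * (j : ℕ) := by
      have hj := j.isLt
      have h2 : d * (l - 1 - (j : ℕ)) + d * (j : ℕ) = d * (l - 1) := by
        rw [← Nat.mul_add]; congr 1; omega
      omega
    calc u ^ (d * (l - 1)) * (u ^ (i : ℕ) * (v ^ d * AdjoinRoot.mk (p ^ l) p) ^ (j : ℕ))
        = u ^ (d * (l - 1) + (i : ℕ)) * (v ^ (d * (j : ℕ)) *
            (AdjoinRoot.mk (p ^ l) p) ^ (j : ℕ)) := by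
          rw [mul_pow, ← pow_mul, pow_add]; ring
      _ = (u ^ ((i : ℕ) + d * (l - 1 - (j : ℕ))) * (u ^ (d * (j : ℕ)) * v ^ (d * (j : ℕ)))) *
            (AdjoinRoot.mk (p ^ l) p) ^ (j : ℕ) := by
          rw [harith, pow_add]; ring
      _ = u ^ ((i : ℕ) + d * (l - 1 - (j : ℕ))) * (AdjoinRoot.mk (p ^ l) p) ^ (j : ℕ) := by
          rw [h1, mul_one]
      _ = AdjoinRoot.mk (p ^ l) (X ^ ((i : ℕ) + d * (l - 1 - (j : ℕ))) * p ^ (j : ℕ)) := by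
          rw [map_mul, map_pow, map_pow, AdjoinRoot.mk_X]
  have harith2 : ∀ (i j : ℕ), i < 2 * d → j < l →
      ((i + d * (l - 1 - j)) + j * (2 * d)) < l * (2 * d) := by
    intro i j hi hj
    obtain ⟨l', rfl⟩ : ∃ l', l = l' + 1 := ⟨l - 1, by omega⟩
    have hj' : j ≤ l' := by omega
    obtain ⟨j', rfl⟩ : ∃ j', l' = j + j' := ⟨l' - j, by omega⟩
    have he : (j + j' + 1) - 1 - j = j' := by omega
    rw [he]
    nlinarith [Nat.zero_le (d * j'), Nat.zero_le (d * j)]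
  -- linear independence
  have hli : LinearIndependent k (fun ij : Fin (2 * d) × Fin l =>
      u ^ (ij.1 : ℕ) * (v ^ d * AdjoinRoot.mk (p ^ l) p) ^ (ij.2 : ℕ)) := by
    rw [Fintype.linearIndependent_iff]
    intro c hc ij
    have hc2 : ∑ ij : Fin (2 * d) × Fin l, c ij •
        AdjoinRoot.mk (p ^ l) (X ^ ((ij.1 : ℕ) + d * (l - 1 - (ij.2 : ℕ))) * p ^ (ij.2 : ℕ))
        = 0 := by
      calc ∑ ij : Fin (2 * d) × Fin l, c ij •
            AdjoinRoot.mk (p ^ l) (X ^ ((ij.1 : ℕ) + d * (l - 1 - (ij.2 : ℕ))) * p ^ (ij.2 : ℕ))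
          = ∑ ij : Fin (2 * d) × Fin l, u ^ (d * (l - 1)) *
              (c ij • (u ^ (ij.1 : ℕ) * (v ^ d * AdjoinRoot.mk (p ^ l) p) ^ (ij.2 : ℕ))) :=
            Finset.sum_congr rfl fun ij _ => by rw [mul_smul_comm, key ij.1 ij.2]
        _ = u ^ (d * (l - 1)) * ∑ ij : Fin (2 * d) × Fin l,
              c ij • (u ^ (ij.1 : ℕ) * (v ^ d * AdjoinRoot.mk (p ^ l) p) ^ (ij.2 : ℕ)) :=
            (Finset.mul_sum _ _ _).symm
        _ = 0 := by rw [hc, mul_zero]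
    set g : k[X] := ∑ ij : Fin (2 * d) × Fin l,
        c ij • (X ^ ((ij.1 : ℕ) + d * (l - 1 - (ij.2 : ℕ))) * p ^ (ij.2 : ℕ)) with hg_def
    have hc3 : AdjoinRoot.mk (p ^ l) g = 0 := by
      rw [hg_def, map_sum]
      simpa only [← AdjoinRoot.smul_mk] using hc2
    have hdvd : p ^ l ∣ g := AdjoinRoot.mk_eq_zero.mp hc3
    have hdegpl : (p ^ l).degree = ((l * (2 * d) : ℕ) : WithBot ℕ) := by
      rw [degree_eq_natDegree hplne, natDegree_pow, hdeg]
    have hgdeg : g.degree < (p ^ l).degree := by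
      rw [hdegpl, hg_def]
      apply lt_of_le_of_lt (degree_sum_le _ _)
      rw [Finset.sup_lt_iff (by exact_mod_cast WithBot.bot_lt_coe _)]
      intro ij _
      apply lt_of_le_of_lt (degree_smul_le _ _)
      rw [degree_mul, degree_X_pow]
      have hpj : (p ^ (ij.2 : ℕ)).degree = (((ij.2 : ℕ) * (2 * d) : ℕ) : WithBot ℕ) := by
        rw [degree_eq_natDegree (pow_ne_zero _ hpne), natDegree_pow, hdeg]
      rw [hpj, ← Nat.cast_add, Nat.cast_lt]
      exact harith2 _ _ ij.1.isLt ij.2.isLt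
    have hg0 : g = 0 := eq_zero_of_dvd_of_degree_lt hdvd hgdeg
    -- rewrite g in the aux form
    set r : ℕ → k[X] := fun j =>
      if h : j < l then ∑ i : Fin (2 * d), c (i, ⟨j, h⟩) • X ^ (i : ℕ) else 0 with hr_def
    have hdegr : ∀ j, (r j).degree < p.degree := by
      intro j
      have hdp : p.degree = ((2 * d : ℕ) : WithBot ℕ) := by
        rw [degree_eq_natDegree hpne, hdeg]
      rw [hdp, hr_def]
      dsimp only
      split
      · apply lt_of_le_of_lt (degree_sum_le _ _)
        rw [Finset.sup_lt_iff (by exact_mod_cast WithBot.bot_lt_coe _)]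
        intro i _
        apply lt_of_le_of_lt (degree_smul_le _ _)
        rw [degree_X_pow, Nat.cast_lt]
        exact i.isLt
      · rw [degree_zero]
        exact_mod_cast WithBot.bot_lt_coe _
    have hsum0 : ∑ j ∈ Finset.range l, p ^ j * (X ^ (d * (l - 1 - j)) * r j) = 0 := by
      rw [← hg0, hg_def]
      rw [← Fin.sum_univ_eq_sum_range (fun j => p ^ j * (X ^ (d * (l - 1 - j)) * r j)) l]
      rw [Fintype.sum_prod_type_right]
      refine Finset.sum_congr rfl fun j _ => ?_
      rw [hr_def]
      simp only [j.isLt, dif_pos, Fin.eta]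
      rw [Finset.mul_sum, Finset.mul_sum]
      refine Finset.sum_congr rfl fun i _ => ?_
      rw [mul_smul_comm, mul_smul_comm]
      congr 1
      rw [pow_add]; ring
    have hr0 : ∀ j, j < l → r j = 0 :=
      aux_padic hirr.prime hpX l (fun j => d * (l - 1 - j)) r hdegr hsum0
    have hrj : ∑ i : Fin (2 * d), c (i, ij.2) • (X : k[X]) ^ (i : ℕ) = 0 := by
      have := hr0 (ij.2 : ℕ) ij.2.isLt
      rw [hr_def] at this
      simpa [ij.2.isLt, Fin.eta] using this
    have := congrArg (fun q => Polynomial.coeff q (ij.1 : ℕ)) hrj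
    simp only [finset_sum_coeff, coeff_smul, coeff_X_pow, smul_eq_mul, coeff_zero] at this
    rw [Finset.sum_eq_single ij.1] at this
    · simpa using this
    · intro b _ hb
      rw [if_neg (fun h => hb (Fin.ext h.symm)), mul_zero]
    · intro h; exact absurd (Finset.mem_univ _) h
  refine ⟨hu, hli, ?_⟩
  -- span
  have hcard : Fintype.card (Fin (2 * d) × Fin l) = Module.finrank k (AdjoinRoot (p ^ l)) := by
    rw [(AdjoinRoot.powerBasis hplne).finrank, AdjoinRoot.powerBasis_dim, natDegree_pow, hdeg]
    simp [Fintype.card_prod]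
    ring
  haveI : Nonempty (Fin (2 * d) × Fin l) := ⟨(⟨0, by omega⟩, ⟨0, by omega⟩)⟩
  exact hli.span_eq_top_of_card_eq_finrank hcard
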